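/- Combining the two previous facts: if Y → W → X is a Markov chain of Bernoulli variables with all marginals in (0,1), then C(X,Y) = C(X,W) · C(W,Y) · sqrt((p_w − p_w²)²/((p_w − p_w²)²)) = δp_{W→X}δp_{Y→W}·sqrt((p_y−p_y²)/(p_x−p_x²)); in particular |C(X,Y)| ≤ |δp_{W→X}|·|δp_{Y→W}|·sqrt((p_y−p_y²)/(p_x−p_x²)), so if both direct increments satisfy |δp| ≤ δ then the indirect correlation satisfies |C(X,Y)| ≤ δ²·sqrt((p_y−p_y²)/(p_x−p_x²)). -/

import Mathlib

open MeasureTheory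

/-- for a Markov chain Y → W → X of Bernoulli variables,
C(X,Y) = δp_{W→X} δp_{Y→W} √((p_y − p_y²)/(p_x − p_x²)); in particular, if both
direct increments are bounded by δ then the indirect correlation satisfies
|C(X,Y)| ≤ δ² √((p_y − p_y²)/(p_x − p_x²)). -/

private lemma msplit {Ω : Type*} [MeasurableSpace Ω] (μ : Measure Ω) [IsFiniteMeasure μ]
    {S T U : Set Ω} (hT : MeasurableSet T) (hU : MeasurableSet U)
    (hST : S = T ∪ U) (hd : Disjoint T U) :
    (μ S).toReal = (μ T).toReal + (μ U).toReal := by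
  rw [hST, measure_union hd hU, ENNReal.toReal_add (measure_ne_top μ T) (measure_ne_top μ U)]

private lemma int4 {Ω : Type*} [MeasurableSpace Ω] (μ : Measure Ω) [IsProbabilityMeasure μ]
    {S T U : Set Ω} (hS : MeasurableSet S) (hT : MeasurableSet T) (hU : MeasurableSet U)
    (a b c d : ℝ) :
    ∫ ω, (a * S.indicator (fun _ => (1:ℝ)) ω + b * T.indicator (fun _ => (1:ℝ)) ω
        + c * U.indicator (fun _ => (1:ℝ)) ω + d) ∂μ
      = a * (μ S).toReal + b * (μ T).toReal + c * (μ U).toReal + d := by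
  have iS : Integrable (S.indicator fun _ => (1:ℝ)) μ := (integrable_const 1).indicator hS
  have iT : Integrable (T.indicator fun _ => (1:ℝ)) μ := (integrable_const 1).indicator hT
  have iU : Integrable (U.indicator fun _ => (1:ℝ)) μ := (integrable_const 1).indicator hU
  have i3 : Integrable (fun ω => a * S.indicator (fun _ => (1:ℝ)) ω
      + b * T.indicator (fun _ => (1:ℝ)) ω + c * U.indicator (fun _ => (1:ℝ)) ω) μ := by
    exact ((iS.const_mul a).add (iT.const_mul b)).add (iU.const_mul c)
  have i2 : Integrable (fun ω => a * S.indicator (fun _ => (1:ℝ)) ω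
      + b * T.indicator (fun _ => (1:ℝ)) ω) μ := by
    exact (iS.const_mul a).add (iT.const_mul b)
  rw [integral_add i3 (integrable_const d),
    integral_add i2 (iU.const_mul c),
    integral_add (iS.const_mul a) (iT.const_mul b),
    MeasureTheory.integral_const_mul, MeasureTheory.integral_const_mul, MeasureTheory.integral_const_mul, integral_const,
    integral_indicator_const _ hS, integral_indicator_const _ hT, integral_indicator_const _ hU]
  simp [Measure.real]

private lemma key_alg (s0 s1 q01 q10 q11 t0 t1 py py0 : ℝ)
    (ht0 : t0 ≠ 0) (ht1 : t1 ≠ 0) (hpy : py ≠ 0) (hpy0 : py0 ≠ 0)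
    (e2 : t1 = q10 + q11) (e3 : py = q01 + q11) (e4 : py0 = 1 - py) (e5 : t0 = 1 - t1) :
    (s0 / t0 * q01 + s1 / t1 * q11) - (s0 + s1) * py
      = (s1 / t1 - s0 / t0) * (q11 / py - q10 / py0) * (py - py ^ 2) := by
  subst e4 e5 e2 e3
  field_simp
  ring

theorem indirect_corr_second_order {Ω : Type*} [MeasurableSpace Ω] (μ : Measure Ω)
    [IsProbabilityMeasure μ] (X W Y : Ω → ℝ)
    (hXm : Measurable X) (hWm : Measurable W) (hYm : Measurable Y)
    (hX01 : ∀ ω, X ω = 0 ∨ X ω = 1) (hW01 : ∀ ω, W ω = 0 ∨ W ω = 1)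
    (hY01 : ∀ ω, Y ω = 0 ∨ Y ω = 1)
    (hposWY : ∀ w y : ℝ, (w = 0 ∨ w = 1) → (y = 0 ∨ y = 1) →
      0 < (μ {ω | W ω = w ∧ Y ω = y}).toReal)
    (hmarkov : ∀ x w y : ℝ, (x = 0 ∨ x = 1) → (w = 0 ∨ w = 1) → (y = 0 ∨ y = 1) →
      (μ {ω | X ω = x ∧ W ω = w ∧ Y ω = y}).toReal /
          (μ {ω | W ω = w ∧ Y ω = y}).toReal =
        (μ {ω | X ω = x ∧ W ω = w}).toReal / (μ {ω | W ω = w}).toReal)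
    (px pw py : ℝ)
    (hpx : px = (μ {ω | X ω = 1}).toReal) (hpw : pw = (μ {ω | W ω = 1}).toReal)
    (hpy : py = (μ {ω | Y ω = 1}).toReal)
    (hpx0 : 0 < px) (hpx1 : px < 1) (hpw0 : 0 < pw) (hpw1 : pw < 1)
    (hpy0 : 0 < py) (hpy1 : py < 1)
    (δpWX δpYW : ℝ)
    (hδpWX : δpWX = (μ {ω | X ω = 1 ∧ W ω = 1}).toReal / (μ {ω | W ω = 1}).toReal -
      (μ {ω | X ω = 1 ∧ W ω = 0}).toReal / (μ {ω | W ω = 0}).toReal)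
    (hδpYW : δpYW = (μ {ω | W ω = 1 ∧ Y ω = 1}).toReal / (μ {ω | Y ω = 1}).toReal -
      (μ {ω | W ω = 1 ∧ Y ω = 0}).toReal / (μ {ω | Y ω = 0}).toReal)
    (δ : ℝ) (hδ1 : |δpWX| ≤ δ) (hδ2 : |δpYW| ≤ δ) :
    (∫ ω, (X ω - ∫ ω', X ω' ∂μ) * (Y ω - ∫ ω', Y ω' ∂μ) ∂μ) /
        (Real.sqrt (∫ ω, (X ω - ∫ ω', X ω' ∂μ) ^ 2 ∂μ) *
          Real.sqrt (∫ ω, (Y ω - ∫ ω', Y ω' ∂μ) ^ 2 ∂μ)) =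
      δpWX * δpYW * Real.sqrt ((py - py ^ 2) / (px - px ^ 2)) ∧
      |(∫ ω, (X ω - ∫ ω', X ω' ∂μ) * (Y ω - ∫ ω', Y ω' ∂μ) ∂μ) /
          (Real.sqrt (∫ ω, (X ω - ∫ ω', X ω' ∂μ) ^ 2 ∂μ) *
            Real.sqrt (∫ ω, (Y ω - ∫ ω', Y ω' ∂μ) ^ 2 ∂μ))| ≤
        δ ^ 2 * Real.sqrt ((py - py ^ 2) / (px - px ^ 2)) := by
  -- measurable sets
  have mA : MeasurableSet {ω | X ω = 1} := hXm (measurableSet_singleton 1)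
  have mB : MeasurableSet {ω | Y ω = 1} := hYm (measurableSet_singleton 1)
  have mAB : MeasurableSet {ω | X ω = 1 ∧ Y ω = 1} :=
    (hXm (measurableSet_singleton 1)).inter (hYm (measurableSet_singleton 1))
  have mW : ∀ w : ℝ, MeasurableSet {ω | W ω = w} := fun w => hWm (measurableSet_singleton w)
  have mY : ∀ y : ℝ, MeasurableSet {ω | Y ω = y} := fun y => hYm (measurableSet_singleton y)
  have mWY : ∀ w y : ℝ, MeasurableSet {ω | W ω = w ∧ Y ω = y} :=
    fun w y => (hWm (measurableSet_singleton w)).inter (hYm (measurableSet_singleton y))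
  have mXW : ∀ w : ℝ, MeasurableSet {ω | X ω = 1 ∧ W ω = w} :=
    fun w => (hXm (measurableSet_singleton 1)).inter (hWm (measurableSet_singleton w))
  have mXWY : ∀ w y : ℝ, MeasurableSet {ω | X ω = 1 ∧ W ω = w ∧ Y ω = y} :=
    fun w y => (hXm (measurableSet_singleton 1)).inter
      ((hWm (measurableSet_singleton w)).inter (hYm (measurableSet_singleton y)))
  -- expectations
  have hEX : ∫ ω', X ω' ∂μ = px := by
    have hpt : ∀ ω, X ω = 1 * ({ω | X ω = 1}).indicator (fun _ => (1:ℝ)) ω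
        + 0 * ({ω | X ω = 1}).indicator (fun _ => (1:ℝ)) ω
        + 0 * ({ω | X ω = 1}).indicator (fun _ => (1:ℝ)) ω + 0 := by
      intro ω
      rcases hX01 ω with h | h <;> simp [Set.indicator_apply, Set.mem_setOf_eq, h]
    rw [integral_congr_ae (Filter.Eventually.of_forall hpt), int4 μ mA mA mA, hpx]
    ring
  have hEY : ∫ ω', Y ω' ∂μ = py := by
    have hpt : ∀ ω, Y ω = 1 * ({ω | Y ω = 1}).indicator (fun _ => (1:ℝ)) ω
        + 0 * ({ω | Y ω = 1}).indicator (fun _ => (1:ℝ)) ω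
        + 0 * ({ω | Y ω = 1}).indicator (fun _ => (1:ℝ)) ω + 0 := by
      intro ω
      rcases hY01 ω with h | h <;> simp [Set.indicator_apply, Set.mem_setOf_eq, h]
    rw [integral_congr_ae (Filter.Eventually.of_forall hpt), int4 μ mB mB mB, hpy]
    ring
  rw [hEX, hEY]
  -- covariance and variances
  have hCov : ∫ ω, (X ω - px) * (Y ω - py) ∂μ
      = (μ {ω | X ω = 1 ∧ Y ω = 1}).toReal - px * py := by
    have hpt : ∀ ω, (X ω - px) * (Y ω - py)
        = 1 * ({ω | X ω = 1 ∧ Y ω = 1}).indicator (fun _ => (1:ℝ)) ω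
        + (-py) * ({ω | X ω = 1}).indicator (fun _ => (1:ℝ)) ω
        + (-px) * ({ω | Y ω = 1}).indicator (fun _ => (1:ℝ)) ω + px * py := by
      intro ω
      rcases hX01 ω with h | h <;> rcases hY01 ω with h' | h' <;>
        simp [Set.indicator_apply, Set.mem_setOf_eq, h, h'] <;> ring
    rw [integral_congr_ae (Filter.Eventually.of_forall hpt), int4 μ mAB mA mB, ← hpx, ← hpy]
    ring
  have hVX : ∫ ω, (X ω - px) ^ 2 ∂μ = px - px ^ 2 := by
    have hpt : ∀ ω, (X ω - px) ^ 2
        = (1 - 2 * px) * ({ω | X ω = 1}).indicator (fun _ => (1:ℝ)) ω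
        + 0 * ({ω | X ω = 1}).indicator (fun _ => (1:ℝ)) ω
        + 0 * ({ω | X ω = 1}).indicator (fun _ => (1:ℝ)) ω + px ^ 2 := by
      intro ω
      rcases hX01 ω with h | h <;>
        simp [Set.indicator_apply, Set.mem_setOf_eq, h] <;> ring
    rw [integral_congr_ae (Filter.Eventually.of_forall hpt), int4 μ mA mA mA, ← hpx]
    ring
  have hVY : ∫ ω, (Y ω - py) ^ 2 ∂μ = py - py ^ 2 := by
    have hpt : ∀ ω, (Y ω - py) ^ 2
        = (1 - 2 * py) * ({ω | Y ω = 1}).indicator (fun _ => (1:ℝ)) ω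
        + 0 * ({ω | Y ω = 1}).indicator (fun _ => (1:ℝ)) ω
        + 0 * ({ω | Y ω = 1}).indicator (fun _ => (1:ℝ)) ω + py ^ 2 := by
      intro ω
      rcases hY01 ω with h | h <;>
        simp [Set.indicator_apply, Set.mem_setOf_eq, h] <;> ring
    rw [integral_congr_ae (Filter.Eventually.of_forall hpt), int4 μ mB mB mB, ← hpy]
    ring
  rw [hCov, hVX, hVY]
  -- abbreviations for measures
  set q00 := (μ {ω | W ω = 0 ∧ Y ω = 0}).toReal with hq00
  set q01 := (μ {ω | W ω = 0 ∧ Y ω = 1}).toReal with hq01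
  set q10 := (μ {ω | W ω = 1 ∧ Y ω = 0}).toReal with hq10
  set q11 := (μ {ω | W ω = 1 ∧ Y ω = 1}).toReal with hq11
  set s0 := (μ {ω | X ω = 1 ∧ W ω = 0}).toReal with hs0
  set s1 := (μ {ω | X ω = 1 ∧ W ω = 1}).toReal with hs1
  set t0 := (μ {ω | W ω = 0}).toReal with ht0
  set t1 := (μ {ω | W ω = 1}).toReal with ht1
  set py0 := (μ {ω | Y ω = 0}).toReal with hpy0'
  set r01 := (μ {ω | X ω = 1 ∧ W ω = 0 ∧ Y ω = 1}).toReal with hr01'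
  set r11 := (μ {ω | X ω = 1 ∧ W ω = 1 ∧ Y ω = 1}).toReal with hr11'
  -- positivity
  have hq01pos : 0 < q01 := hposWY 0 1 (Or.inl rfl) (Or.inr rfl)
  have hq10pos : 0 < q10 := hposWY 1 0 (Or.inr rfl) (Or.inl rfl)
  have hq11pos : 0 < q11 := hposWY 1 1 (Or.inr rfl) (Or.inr rfl)
  have hq00pos : 0 < q00 := hposWY 0 0 (Or.inl rfl) (Or.inl rfl)
  -- splits
  have hdisjW : ∀ (P : Ω → Prop), Disjoint {ω | P ω ∧ W ω = 0} {ω | P ω ∧ W ω = 1} := by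
    intro P
    rw [Set.disjoint_left]
    rintro ω ⟨-, h0⟩ ⟨-, h1⟩
    rw [h0] at h1; norm_num at h1
  have hunivW : (Set.univ : Set Ω) = {ω | W ω = 0} ∪ {ω | W ω = 1} := by
    ext ω; simpa using hW01 ω
  have hunivY : (Set.univ : Set Ω) = {ω | Y ω = 0} ∪ {ω | Y ω = 1} := by
    ext ω; simpa using hY01 ω
  have hdisjW' : Disjoint {ω : Ω | W ω = 0} {ω | W ω = 1} := by
    rw [Set.disjoint_left]; rintro ω h0 h1
    simp only [Set.mem_setOf_eq] at h0 h1; rw [h0] at h1; norm_num at h1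
  have hdisjY' : Disjoint {ω : Ω | Y ω = 0} {ω | Y ω = 1} := by
    rw [Set.disjoint_left]; rintro ω h0 h1
    simp only [Set.mem_setOf_eq] at h0 h1; rw [h0] at h1; norm_num at h1
  have hdisjY : ∀ (P : Ω → Prop), Disjoint {ω | P ω ∧ Y ω = 0} {ω | P ω ∧ Y ω = 1} := by
    intro P
    rw [Set.disjoint_left]
    rintro ω ⟨-, h0⟩ ⟨-, h1⟩
    rw [h0] at h1; norm_num at h1
  -- t0 = q00 + q01, t1 = q10 + q11 (split on Y)
  have hsplit_t0 : t0 = q00 + q01 := by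
    refine msplit μ (mWY 0 0) (mWY 0 1) ?_ (hdisjY (fun ω => W ω = 0))
    ext ω; have := hY01 ω
    simp only [Set.mem_union, Set.mem_setOf_eq]
    tauto
  have hsplit_t1 : t1 = q10 + q11 := by
    refine msplit μ (mWY 1 0) (mWY 1 1) ?_ (hdisjY (fun ω => W ω = 1))
    ext ω; have := hY01 ω
    simp only [Set.mem_union, Set.mem_setOf_eq]
    tauto
  -- py = q01 + q11, py0 = q00 + q10 (split on W) : need sets {Y=y} = {W=0∧Y=y} ∪ {W=1∧Y=y}
  have hsplit_py : py = q01 + q11 := by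
    rw [hpy]
    refine msplit μ (mWY 0 1) (mWY 1 1) ?_ ?_
    · ext ω; have := hW01 ω
      simp only [Set.mem_union, Set.mem_setOf_eq]
      tauto
    · rw [Set.disjoint_left]
      rintro ω ⟨h0, -⟩ ⟨h1, -⟩
      rw [h0] at h1; norm_num at h1
  -- totals
  have hone_Y : py0 + py = 1 := by
    rw [hpy]
    have := msplit μ (mY 0) (mY 1) hunivY hdisjY'
    simp only [measure_univ, ENNReal.toReal_one] at this
    linarith [this]
  have hone_W : t0 + t1 = 1 := by
    have := msplit μ (mW 0) (mW 1) hunivW hdisjW'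
    simp only [measure_univ, ENNReal.toReal_one] at this
    linarith [this]
  -- px = s0 + s1
  have hsplit_px : px = s0 + s1 := by
    rw [hpx]
    refine msplit μ (mXW 0) (mXW 1) ?_ (hdisjW (fun ω => X ω = 1))
    ext ω; have := hW01 ω
    simp only [Set.mem_union, Set.mem_setOf_eq]
    tauto
  -- pxy = r01 + r11
  have hsplit_pxy : (μ {ω | X ω = 1 ∧ Y ω = 1}).toReal = r01 + r11 := by
    refine msplit μ (mXWY 0 1) (mXWY 1 1) ?_ ?_
    · ext ω; have := hW01 ω
      simp only [Set.mem_union, Set.mem_setOf_eq]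
      tauto
    · rw [Set.disjoint_left]
      rintro ω ⟨-, h0, -⟩ ⟨-, h1, -⟩
      rw [h0] at h1; norm_num at h1
  -- positivity of denominators
  have ht0pos : 0 < t0 := by rw [hsplit_t0]; linarith
  have ht1pos : 0 < t1 := by rw [hsplit_t1]; linarith
  have hpy0pos : 0 < py0 := by linarith [hone_Y, hpy0, hpy1]
  -- markov: r01 = s0/t0 * q01, r11 = s1/t1 * q11
  have hm01 := hmarkov 1 0 1 (Or.inr rfl) (Or.inl rfl) (Or.inr rfl)
  have hm11 := hmarkov 1 1 1 (Or.inr rfl) (Or.inr rfl) (Or.inr rfl)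
  have hr01 : r01 = s0 / t0 * q01 := (div_eq_iff (ne_of_gt hq01pos)).mp hm01
  have hr11 : r11 = s1 / t1 * q11 := (div_eq_iff (ne_of_gt hq11pos)).mp hm11
  -- key identity
  have hkey : (μ {ω | X ω = 1 ∧ Y ω = 1}).toReal - px * py
      = δpWX * δpYW * (py - py ^ 2) := by
    rw [hsplit_pxy, hr01, hr11, hsplit_px, hδpWX, hδpYW, ← hpy]
    exact key_alg s0 s1 q01 q10 q11 t0 t1 py py0 (ne_of_gt ht0pos) (ne_of_gt ht1pos)
      (ne_of_gt hpy0) (ne_of_gt hpy0pos) hsplit_t1 hsplit_py (by linarith) (by linarith)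
  rw [hkey]
  -- sqrt manipulation
  have hax : 0 < px - px ^ 2 := by
    have h : px * (1 - px) = px - px ^ 2 := by ring
    linarith [mul_pos hpx0 (sub_pos.mpr hpx1)]
  have hay : 0 < py - py ^ 2 := by
    have h : py * (1 - py) = py - py ^ 2 := by ring
    linarith [mul_pos hpy0 (sub_pos.mpr hpy1)]
  have hsq : (py - py ^ 2) / (Real.sqrt (px - px ^ 2) * Real.sqrt (py - py ^ 2))
      = Real.sqrt ((py - py ^ 2) / (px - px ^ 2)) := by
    rw [Real.sqrt_div hay.le, div_eq_div_iff (by positivity) (by positivity)]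
    linear_combination (-Real.sqrt (px - px ^ 2)) * Real.mul_self_sqrt hay.le
  have hcorr : δpWX * δpYW * (py - py ^ 2)
      / (Real.sqrt (px - px ^ 2) * Real.sqrt (py - py ^ 2))
      = δpWX * δpYW * Real.sqrt ((py - py ^ 2) / (px - px ^ 2)) := by
    rw [mul_div_assoc, hsq]
  refine ⟨hcorr, ?_⟩
  rw [hcorr, abs_mul, abs_mul, abs_of_nonneg (Real.sqrt_nonneg _)]
  have hδ0 : 0 ≤ δ := le_trans (abs_nonneg _) hδ1
  have hb : |δpWX| * |δpYW| ≤ δ ^ 2 := by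
    calc |δpWX| * |δpYW| ≤ δ * δ := mul_le_mul hδ1 hδ2 (abs_nonneg _) hδ0
      _ = δ ^ 2 := (pow_two δ).symm
  exact mul_le_mul_of_nonneg_right hb (Real.sqrt_nonneg _)
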